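/- Let S₀, S₁, … be a saturation with respect to the PaRC calculus. For every j ≥ 0, a ground clause is redundant with respect to S_j* if and only if it is redundant with respect to ⌊S_j⌋. -/
import Mathlib


set_option autoImplicit false

namespace PaRC

/-- First-order terms over a signature `F` with arity function `ar`;
variables are natural numbers. -/
inductive Trm (F : Type) (ar : F → ℕ) : Type
  | var : ℕ → Trm F ar
  | app : (f : F) → (Fin (ar f) → Trm F ar) → Trm F ar

variable {F : Type} {ar : F → ℕ}

/-- Substitutions. -/
abbrev Subst (F : Type) (ar : F → ℕ) : Type := ℕ → Trm F ar

/-- Applying a substitution to a term. -/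
def Trm.subst (σ : Subst F ar) : Trm F ar → Trm F ar
  | .var x => σ x
  | .app f a => .app f (fun i => (a i).subst σ)

/-- Composition of substitutions. -/
def Subst.comp (σ τ : Subst F ar) : Subst F ar := fun x => Trm.subst τ (σ x)

/-- A term is ground if it contains no variables. -/
def Trm.IsGround : Trm F ar → Prop
  | .var _ => False
  | .app _ a => ∀ i, (a i).IsGround

/-- Free variables of a term. -/
def Trm.fvars : Trm F ar → Set ℕ
  | .var x => {x}
  | .app _ a => ⋃ i, (a i).fvars

/-- Subterm at a position (list of argument indices). -/
def Trm.atPos : Trm F ar → List ℕ → Option (Trm F ar)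
  | t, [] => some t
  | .var _, _ :: _ => none
  | .app f a, i :: p => if h : i < ar f then Trm.atPos (a ⟨i, h⟩) p else none

/-- Replace the subterm at a given position. -/
def Trm.replace : Trm F ar → List ℕ → Trm F ar → Trm F ar
  | _, [], u => u
  | .var x, _ :: _, _ => .var x
  | .app f a, i :: p, u =>
      if h : i < ar f then
        .app f (Function.update a ⟨i, h⟩ (Trm.replace (a ⟨i, h⟩) p u))
      else .app f a

/-- An equality literal: polarity together with the two sides. -/
structure Lit (F : Type) (ar : F → ℕ) : Type where
  pos : Bool
  lhs : Trm F ar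
  rhs : Trm F ar

def Lit.subst (σ : Subst F ar) (L : Lit F ar) : Lit F ar :=
  ⟨L.pos, Trm.subst σ L.lhs, Trm.subst σ L.rhs⟩

def Lit.IsGround (L : Lit F ar) : Prop := L.lhs.IsGround ∧ L.rhs.IsGround

def Lit.fvars (L : Lit F ar) : Set ℕ := L.lhs.fvars ∪ L.rhs.fvars

/-- A clause is a (finite) multiset of literals. -/
abbrev Clause (F : Type) (ar : F → ℕ) : Type := Multiset (Lit F ar)

def Clause.subst (σ : Subst F ar) (C : Clause F ar) : Clause F ar := C.map (Lit.subst σ)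

def Clause.IsGround (C : Clause F ar) : Prop := ∀ L ∈ C, L.IsGround

def Clause.fvars (C : Clause F ar) : Set ℕ := {x | ∃ L ∈ C, x ∈ L.fvars}

/-- A substitution is grounding for a clause if the instance is ground. -/
def GroundingFor (θ : Subst F ar) (C : Clause F ar) : Prop :=
  Clause.IsGround (Clause.subst θ C)

/-- A term occurs in a clause if it is a subterm of a side of one of its literals. -/
def OccursIn (u : Trm F ar) (C : Clause F ar) : Prop :=
  ∃ L ∈ C, ∃ p, Trm.atPos L.lhs p = some u ∨ Trm.atPos L.rhs p = some u

/-! ### Semantics: Σ-algebras, entailment and satisfiability -/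

/-- A Σ-algebra (first-order structure for the purely equational signature). -/
structure Alg (F : Type) (ar : F → ℕ) : Type 1 where
  carrier : Type
  nonempty : Nonempty carrier
  interp : (f : F) → (Fin (ar f) → carrier) → carrier

def Trm.eval (A : Alg F ar) (v : ℕ → A.carrier) : Trm F ar → A.carrier
  | .var x => v x
  | .app f a => A.interp f (fun i => (a i).eval A v)

def Lit.holds (A : Alg F ar) (v : ℕ → A.carrier) (L : Lit F ar) : Prop :=
  if L.pos then L.lhs.eval A v = L.rhs.eval A v else L.lhs.eval A v ≠ L.rhs.eval A v

/-- A clause is true in an algebra if it is true under every valuation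
(variables are implicitly universally quantified). -/
def Clause.validIn (A : Alg F ar) (C : Clause F ar) : Prop :=
  ∀ v : ℕ → A.carrier, ∃ L ∈ C, Lit.holds A v L

/-- First-order entailment between a set of clauses and a clause. -/
def Entails (S : Set (Clause F ar)) (D : Clause F ar) : Prop :=
  ∀ A : Alg F ar, (∀ C ∈ S, Clause.validIn A C) → Clause.validIn A D

/-- Satisfiability of a set of clauses. -/
def Satisfiable (S : Set (Clause F ar)) : Prop :=
  ∃ A : Alg F ar, ∀ C ∈ S, Clause.validIn A C

/-! ### Simplification orders and their bag extensions -/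

/-- A simplification order: a reduction ordering that is total on ground terms
and has the subterm property. -/
structure SimpOrd (F : Type) (ar : F → ℕ) : Type where
  gt : Trm F ar → Trm F ar → Prop
  trans : ∀ {s t u : Trm F ar}, gt s t → gt t u → gt s u
  irrefl : ∀ s : Trm F ar, ¬ gt s s
  wf : WellFounded (fun s t : Trm F ar => gt t s)
  substStable : ∀ (σ : Subst F ar) {s t : Trm F ar}, gt s t →
    gt (Trm.subst σ s) (Trm.subst σ t)
  ctxStable : ∀ (s : Trm F ar) (p : List ℕ) {l r : Trm F ar}, (Trm.atPos s p).isSome →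
    gt l r → gt (Trm.replace s p l) (Trm.replace s p r)
  subterm : ∀ {s t : Trm F ar} (p : List ℕ), Trm.atPos s p = some t → s ≠ t → gt s t
  totalGround : ∀ {s t : Trm F ar}, s.IsGround → t.IsGround → s ≠ t → gt s t ∨ gt t s

/-- Bag (Dershowitz–Manna multiset) extension of an ordering: `N > M`. -/
def MultGT {α : Type} (r : α → α → Prop) (N M : Multiset α) : Prop :=
  ∃ X Y Z : Multiset α, X ≠ 0 ∧ N = Z + X ∧ M = Z + Y ∧ ∀ y ∈ Y, ∃ x ∈ X, r x y

/-- The multiset of terms associated to a literal: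
`{s, t}` for `s ≈ t` and `{s, s, t, t}` for `s ≉ t`. -/
def Lit.ms (L : Lit F ar) : Multiset (Trm F ar) :=
  if L.pos then {L.lhs, L.rhs} else {L.lhs, L.lhs, L.rhs, L.rhs}

/-- The induced ordering on literals. -/
def litGT (O : SimpOrd F ar) (L M : Lit F ar) : Prop := MultGT O.gt L.ms M.ms

/-- The induced ordering on clauses. -/
def clauseGT (O : SimpOrd F ar) (C D : Clause F ar) : Prop := MultGT (litGT O) C D

def clauseGE (O : SimpOrd F ar) (C D : Clause F ar) : Prop := clauseGT O C D ∨ C = D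

/-- A ground clause `D` is redundant w.r.t. a set `S` of ground clauses if it is
entailed by finitely many clauses of `S` that are all smaller than `D`. -/
def Redundant (O : SimpOrd F ar) (S : Set (Clause F ar)) (D : Clause F ar) : Prop :=
  ∃ Cs : List (Clause F ar), (∀ C ∈ Cs, C ∈ S) ∧
    Entails {C | C ∈ Cs} D ∧ ∀ C ∈ Cs, clauseGT O D C

/-! ### Redundancy formulas and partial clauses -/

/-- Redundancy formulas: first-order formulas over the term algebra extended with
the interpreted predicates `≻` (the simplification order) and equality. -/
inductive RForm (F : Type) (ar : F → ℕ) : Type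
  | falsum : RForm F ar
  | verum : RForm F ar
  | eq (s t : Trm F ar) : RForm F ar
  | gt (s t : Trm F ar) : RForm F ar
  | and (a b : RForm F ar) : RForm F ar
  | or (a b : RForm F ar) : RForm F ar
  | ex (x : ℕ) (a : RForm F ar) : RForm F ar

def RForm.subst (σ : Subst F ar) : RForm F ar → RForm F ar
  | .falsum => .falsum
  | .verum => .verum
  | .eq s t => .eq (Trm.subst σ s) (Trm.subst σ t)
  | .gt s t => .gt (Trm.subst σ s) (Trm.subst σ t)
  | .and a b => .and (a.subst σ) (b.subst σ)
  | .or a b => .or (a.subst σ) (b.subst σ)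
  | .ex x a => .ex x (a.subst fun y => if y = x then Trm.var x else σ y)

def RForm.fvars : RForm F ar → Set ℕ
  | .falsum => ∅
  | .verum => ∅
  | .eq s t => s.fvars ∪ t.fvars
  | .gt s t => s.fvars ∪ t.fvars
  | .and a b => a.fvars ∪ b.fvars
  | .or a b => a.fvars ∪ b.fvars
  | .ex x a => a.fvars \ {x}

/-- Truth of a redundancy formula in the extended term algebra `T_R(Σ)`,
under a valuation `v` mapping variables to (ground) terms. -/
def RForm.realize (O : SimpOrd F ar) (v : Subst F ar) : RForm F ar → Prop
  | .falsum => False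
  | .verum => True
  | .eq s t => Trm.subst v s = Trm.subst v t
  | .gt s t => O.gt (Trm.subst v s) (Trm.subst v t)
  | .and a b => a.realize O v ∧ b.realize O v
  | .or a b => a.realize O v ∨ b.realize O v
  | .ex x a => ∃ g : Trm F ar, g.IsGround ∧ a.realize O (Function.update v x g)

/-- `σ ⊨ R`: every ground instance of `Rσ` is true in `T_R(Σ)`. -/
def RSat (O : SimpOrd F ar) (σ : Subst F ar) (R : RForm F ar) : Prop :=
  ∀ v : Subst F ar, (∀ x, (v x).IsGround) → RForm.realize O v (RForm.subst σ R)

theorem RForm.falsum_fvars_sub (s : Set ℕ) : RForm.fvars (.falsum : RForm F ar) ⊆ s := by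
  intro x hx; simp [RForm.fvars] at hx

/-- `s ⪰ t` as a redundancy formula. -/
def RForm.ge (s t : Trm F ar) : RForm F ar := .or (.gt s t) (.eq s t)

/-- `(s ≐ t) ⪰ l` as a redundancy formula. -/
def Lit.geForm (L : Lit F ar) (l : Trm F ar) : RForm F ar :=
  .or (RForm.ge L.lhs l) (RForm.ge L.rhs l)

/-- `(s ≐ t) ≻ l` as a redundancy formula. -/
def Lit.gtForm (L : Lit F ar) (l : Trm F ar) : RForm F ar :=
  .or (.gt L.lhs l) (.gt L.rhs l)

/-- `C ⪰ l` as a redundancy formula (disjunction over the literals of `C`). -/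
noncomputable def Clause.geForm (C : Clause F ar) (l : Trm F ar) : RForm F ar :=
  C.toList.foldr (fun L acc => RForm.or (Lit.geForm L l) acc) RForm.falsum

/-- `C ≻ l` as a redundancy formula (disjunction over the literals of `C`). -/
noncomputable def Clause.gtForm (C : Clause F ar) (l : Trm F ar) : RForm F ar :=
  C.toList.foldr (fun L acc => RForm.or (Lit.gtForm L l) acc) RForm.falsum

/-- A partial clause `C ⋈ R`: a clause together with a redundancy formula all of
whose free variables occur in the clause. -/
structure PClause (F : Type) (ar : F → ℕ) : Type where
  cl : Clause F ar
  rf : RForm F ar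
  hfv : RForm.fvars rf ⊆ Clause.fvars cl

/-- `⌊C ⋈ R⌋`: the ground instances `Cθ` with `θ ⊭ R`. -/
def pgnd (O : SimpOrd F ar) (pc : PClause F ar) : Set (Clause F ar) :=
  {D | ∃ θ : Subst F ar, D = Clause.subst θ pc.cl ∧ Clause.IsGround D ∧ ¬ RSat O θ pc.rf}

/-- `⌊S⌋` for a set of partial clauses. -/
def gndS (O : SimpOrd F ar) (S : Set (PClause F ar)) : Set (Clause F ar) :=
  ⋃ pc ∈ S, pgnd O pc

/-- `S*`: all ground instances of clauses occurring in `S`. -/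
def gstar (S : Set (PClause F ar)) : Set (Clause F ar) :=
  {D | ∃ pc ∈ S, ∃ θ : Subst F ar, D = Clause.subst θ pc.cl ∧ Clause.IsGround D}

/-! ### The PaRC calculus -/

def IsUnifier (σ : Subst F ar) (s t : Trm F ar) : Prop := Trm.subst σ s = Trm.subst σ t

def IsMGU (σ : Subst F ar) (s t : Trm F ar) : Prop :=
  IsUnifier σ s t ∧ ∀ η : Subst F ar, IsUnifier η s t → ∃ μ : Subst F ar, η = Subst.comp σ μ

/-- A literal selection function satisfying the standard condition w.r.t. `≻`. -/
structure SelFun (F : Type) (ar : F → ℕ) (O : SimpOrd F ar) : Type where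
  sel : Clause F ar → Set (Lit F ar)
  subset : ∀ C : Clause F ar, sel C ⊆ {L | L ∈ C}
  nonemptyOn : ∀ C : Clause F ar, C ≠ 0 → (sel C).Nonempty
  standard : ∀ C : Clause F ar,
    (∃ L ∈ sel C, L.pos = false) ∨ ∀ L ∈ sel C, ∀ M ∈ C, ¬ litGT O M L

/-- The inference rules of the PaRC calculus on partial clauses.
`Inf O sel prems σ concl` means: there is a PaRC inference with premises `prems`,
most general unifier `σ`, and conclusion `concl`; selected literals are the displayed
first literals of the premises. -/
inductive Inf (O : SimpOrd F ar) (sel : SelFun F ar O) :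
    List (PClause F ar) → Subst F ar → Clause F ar → Prop
  | sup {l r : Trm F ar} {C₁ : Clause F ar} {R₁ : RForm F ar}
      {h₁ : RForm.fvars R₁ ⊆ Clause.fvars (Lit.mk true l r ::ₘ C₁)}
      {b : Bool} {s t : Trm F ar} {C₂ : Clause F ar} {R₂ : RForm F ar}
      {h₂ : RForm.fvars R₂ ⊆ Clause.fvars (Lit.mk b s t ::ₘ C₂)}
      {p : List ℕ} {l' : Trm F ar} {σ : Subst F ar} :
      Trm.atPos s p = some l' →
      (∀ x, l' ≠ .var x) →
      IsMGU σ l l' →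
      Lit.mk true l r ∈ sel.sel (Lit.mk true l r ::ₘ C₁) →
      Lit.mk b s t ∈ sel.sel (Lit.mk b s t ::ₘ C₂) →
      ¬ RSat O σ (RForm.ge r l) →
      ¬ RSat O σ (RForm.ge t s) →
      ¬ RSat O σ (Clause.geForm C₁ l) →
      (b = true → ¬ RSat O σ (Clause.geForm C₂ s)) →
      ¬ RSat O σ R₁ →
      ¬ RSat O σ R₂ →
      Inf O sel [⟨Lit.mk true l r ::ₘ C₁, R₁, h₁⟩, ⟨Lit.mk b s t ::ₘ C₂, R₂, h₂⟩] σ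
        (Clause.subst σ (Lit.mk b (Trm.replace s p r) t ::ₘ (C₁ + C₂)))
  | eqres {s t : Trm F ar} {C : Clause F ar} {R : RForm F ar}
      {h : RForm.fvars R ⊆ Clause.fvars (Lit.mk false s t ::ₘ C)} {σ : Subst F ar} :
      IsMGU σ s t →
      Lit.mk false s t ∈ sel.sel (Lit.mk false s t ::ₘ C) →
      ¬ RSat O σ R →
      Inf O sel [⟨Lit.mk false s t ::ₘ C, R, h⟩] σ (Clause.subst σ C)
  | eqfac {s t s' t' : Trm F ar} {C : Clause F ar} {R : RForm F ar}
      {h : RForm.fvars R ⊆ Clause.fvars (Lit.mk true s t ::ₘ Lit.mk true s' t' ::ₘ C)}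
      {σ : Subst F ar} :
      IsMGU σ s s' →
      Lit.mk true s t ∈ sel.sel (Lit.mk true s t ::ₘ Lit.mk true s' t' ::ₘ C) →
      Lit.mk true s' t' ∈ sel.sel (Lit.mk true s t ::ₘ Lit.mk true s' t' ::ₘ C) →
      ¬ RSat O σ (RForm.ge t s) →
      ¬ RSat O σ (RForm.gt t' t) →
      ¬ RSat O σ (Clause.gtForm C s) →
      ¬ RSat O σ R →
      Inf O sel [⟨Lit.mk true s t ::ₘ Lit.mk true s' t' ::ₘ C, R, h⟩] σ
        (Clause.subst σ (Lit.mk true s t ::ₘ Lit.mk false t t' ::ₘ C))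

/-! ### Saturation -/

/-- A saturation w.r.t. the PaRC calculus: `S 0` consists of partial clauses of the
form `C ⋈ ⊥`, and each step is either an inference step or a redundancy step. -/
structure Saturation (O : SimpOrd F ar) (sel : SelFun F ar O) : Type where
  S : ℕ → Set (PClause F ar)
  init : ∀ pc ∈ S 0, pc.rf = RForm.falsum
  step : ∀ i : ℕ,
    (∃ (prems : List (PClause F ar)) (σ : Subst F ar) (concl : Clause F ar),
        (∀ pc ∈ prems, pc ∈ S i) ∧ Inf O sel prems σ concl ∧
        S (i + 1) = S i ∪ {⟨concl, RForm.falsum, RForm.falsum_fvars_sub _⟩}) ∨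
    (∃ pc ∈ S i, ∃ (R₂ : RForm F ar)
        (h : RForm.fvars (RForm.or pc.rf R₂) ⊆ Clause.fvars pc.cl),
        (∀ θ : Subst F ar, GroundingFor θ pc.cl → RSat O θ R₂ →
          Redundant O (gstar (S i)) (Clause.subst θ pc.cl)) ∧
        S (i + 1) = (S i \ {pc}) ∪ {⟨pc.cl, RForm.or pc.rf R₂, h⟩})

variable {O : SimpOrd F ar} {sel : SelFun F ar O}

/-- `S_ω = ⋃ i, S i`. -/
def Saturation.Somega (𝕊 : Saturation O sel) : Set (PClause F ar) := ⋃ i, 𝕊.S i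

/-- The limit `⋃_{i≥0} ⋂_{j≥i} ⌊S_j⌋` of a saturation. -/
def Saturation.limit (𝕊 : Saturation O sel) : Set (Clause F ar) :=
  ⋃ i : ℕ, ⋂ j : ℕ, ⋂ (_ : j ≥ i), gndS O (𝕊.S j)

/-- A ground clause is persistent if it belongs to the limit. -/
def Saturation.Persistent (𝕊 : Saturation O sel) (C : Clause F ar) : Prop := C ∈ 𝕊.limit

/-- Fairness of a saturation. -/
def Saturation.Fair (𝕊 : Saturation O sel) : Prop :=
  ∀ (prems : List (PClause F ar)) (σ : Subst F ar) (concl : Clause F ar) (ρ : Subst F ar),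
    Inf O sel prems σ concl →
    (∀ pc ∈ prems, 𝕊.Persistent (Clause.subst ρ (Clause.subst σ pc.cl))) →
    ∃ i : ℕ, (⟨concl, RForm.falsum, RForm.falsum_fvars_sub _⟩ : PClause F ar) ∈ 𝕊.S i

/-! ### Ground rewrite systems and the model construction -/

/-- One-step ground rewriting with a set of (ground) rewrite rules. -/
def Rw (I : Set (Trm F ar × Trm F ar)) (s t : Trm F ar) : Prop :=
  ∃ lr ∈ I, ∃ p : List ℕ, Trm.atPos s p = some lr.1 ∧ t = Trm.replace s p lr.2

def RwStar (I : Set (Trm F ar × Trm F ar)) : Trm F ar → Trm F ar → Prop :=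
  Relation.ReflTransGen (Rw I)

/-- A term is irreducible (a normal form) in `I`. -/
def NormalForm (I : Set (Trm F ar × Trm F ar)) (t : Trm F ar) : Prop := ∀ u, ¬ Rw I t u

/-- `s` and `t` have the same normal form in `I`. -/
def SameNF (I : Set (Trm F ar × Trm F ar)) (s t : Trm F ar) : Prop :=
  ∃ u : Trm F ar, RwStar I s u ∧ RwStar I t u ∧ NormalForm I u

/-- Truth of a ground clause in the interpretation given by a rewrite system. -/
def TrueIn (I : Set (Trm F ar × Trm F ar)) (C : Clause F ar) : Prop :=
  ∃ L ∈ C, if L.pos then SameNF I L.lhs L.rhs else ¬ SameNF I L.lhs L.rhs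

def NonOverlapping (I : Set (Trm F ar × Trm F ar)) : Prop :=
  ∀ lr ∈ I, ∀ lr' ∈ I, lr ≠ lr' → ∀ p : List ℕ, Trm.atPos (Prod.fst lr) p ≠ some (Prod.fst lr')

def Terminating (I : Set (Trm F ar × Trm F ar)) : Prop :=
  WellFounded (fun s t : Trm F ar => Rw I t s)

def Confluent (I : Set (Trm F ar × Trm F ar)) : Prop :=
  ∀ a b c : Trm F ar, RwStar I a b → RwStar I a c → ∃ d, RwStar I b d ∧ RwStar I c d

/-- The productivity condition of the model construction: there is a partial clause
`(l₁ ≈ r₁ ∨ C ⋈ R) ∈ S_ω` (with `l₁ ≈ r₁` selected) and a grounding substitution `θ`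
with `l₁θ = l`, `l₁θ ≻ r₁θ`, `l₁θ ≻ Cθ`, `θ ⊭ R`, `I_{≺l} ⊭ Cθ`, producing the rule
`l → rr` where `rr = r₁θ`. -/
def ProducesWith (O : SimpOrd F ar) (sel : SelFun F ar O) (Sω : Set (PClause F ar))
    (Ipre : Set (Trm F ar × Trm F ar)) (l rr : Trm F ar) : Prop :=
  ∃ (l₁ r₁ : Trm F ar) (C : Clause F ar) (R : RForm F ar)
    (h : RForm.fvars R ⊆ Clause.fvars (Lit.mk true l₁ r₁ ::ₘ C)) (θ : Subst F ar),
    (⟨Lit.mk true l₁ r₁ ::ₘ C, R, h⟩ : PClause F ar) ∈ Sω ∧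
    Lit.mk true l₁ r₁ ∈ sel.sel (Lit.mk true l₁ r₁ ::ₘ C) ∧
    GroundingFor θ (Lit.mk true l₁ r₁ ::ₘ C) ∧
    Trm.subst θ l₁ = l ∧
    O.gt (Trm.subst θ l₁) (Trm.subst θ r₁) ∧
    (∀ L ∈ Clause.subst θ C, O.gt (Trm.subst θ l₁) L.lhs ∧ O.gt (Trm.subst θ l₁) L.rhs) ∧
    ¬ RSat O θ R ∧
    ¬ TrueIn Ipre (Clause.subst θ C) ∧
    rr = Trm.subst θ r₁

/-- The rewrite system `I_l` of the model construction, defined by well-founded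
recursion on `≻`. -/
noncomputable def Interp (O : SimpOrd F ar) (sel : SelFun F ar O)
    (Sω : Set (PClause F ar)) : Trm F ar → Set (Trm F ar × Trm F ar) :=
  WellFounded.fix (C := fun _ => Set (Trm F ar × Trm F ar)) O.wf
    (fun l Irec =>
      let Ipre : Set (Trm F ar × Trm F ar) := ⋃ (r : Trm F ar), ⋃ (h : O.gt l r), Irec r h
      letI := Classical.propDecidable
      if h : NormalForm Ipre l ∧ ∃ rr, ProducesWith O sel Sω Ipre l rr then
        Ipre ∪ {(l, h.2.choose)}
      else Ipre)

/-- The rewrite system `I_{≺l}` of the model construction. -/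
noncomputable def IPre (O : SimpOrd F ar) (sel : SelFun F ar O)
    (Sω : Set (PClause F ar)) (l : Trm F ar) : Set (Trm F ar × Trm F ar) :=
  ⋃ (r : Trm F ar), ⋃ (_ : O.gt l r), Interp O sel Sω r

/-- The rewrite system `I_ω = ⋃_l I_l` of the model construction. -/
noncomputable def IOmega (O : SimpOrd F ar) (sel : SelFun F ar O)
    (Sω : Set (PClause F ar)) : Set (Trm F ar × Trm F ar) :=
  ⋃ (l : Trm F ar), Interp O sel Sω l

/-! ### Auxiliary lemmas for the proof -/

section Aux

lemma Trm.isGround_notin {t : Trm F ar} (h : t.IsGround) : ∀ x, x ∉ t.fvars := by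
  induction t with
  | var y => exact absurd h (by simp [Trm.IsGround])
  | app f a ih =>
    intro x hx
    simp only [Trm.fvars, Set.mem_iUnion] at hx
    obtain ⟨i, hi⟩ := hx
    exact ih i (h i) x hi

lemma Trm.ground_subst {θ : Subst F ar} : ∀ {t : Trm F ar},
    (t.subst θ).IsGround → ∀ x ∈ t.fvars, (θ x).IsGround := by
  intro t
  induction t with
  | var y =>
    intro h x hx
    have : x = y := hx
    subst this; exact h
  | app f a ih =>
    intro h x hx
    simp only [Trm.fvars, Set.mem_iUnion] at hx
    obtain ⟨i, hi⟩ := hx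
    exact ih i (h i) x hi

lemma Trm.subst_congr {v w : Subst F ar} : ∀ {t : Trm F ar},
    (∀ x ∈ t.fvars, v x = w x) → t.subst v = t.subst w := by
  intro t
  induction t with
  | var y => intro h; exact h y rfl
  | app f a ih =>
    intro h
    simp only [Trm.subst]
    congr 1
    funext i
    exact ih i (fun x hx => h x (Set.mem_iUnion.mpr ⟨i, hx⟩))

lemma Trm.mem_fvars_subst {θ : Subst F ar} : ∀ {t : Trm F ar} {y : ℕ},
    y ∈ (t.subst θ).fvars → ∃ x ∈ t.fvars, y ∈ (θ x).fvars := by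
  intro t
  induction t with
  | var z => intro y hy; exact ⟨z, rfl, hy⟩
  | app f a ih =>
    intro y hy
    simp only [Trm.subst, Trm.fvars, Set.mem_iUnion] at hy
    obtain ⟨i, hi⟩ := hy
    obtain ⟨x, hx, hyx⟩ := ih i hi
    exact ⟨x, Set.mem_iUnion.mpr ⟨i, hx⟩, hyx⟩

lemma RForm.mem_fvars_subst : ∀ (R : RForm F ar) (θ : Subst F ar) (y : ℕ),
    y ∈ (R.subst θ).fvars → ∃ x ∈ R.fvars, y ∈ (θ x).fvars := by
  intro R
  induction R with
  | falsum => intro θ y hy; simp [RForm.subst, RForm.fvars] at hy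
  | verum => intro θ y hy; simp [RForm.subst, RForm.fvars] at hy
  | eq s t =>
    intro θ y hy
    rcases hy with hy | hy
    · obtain ⟨x, hx, h⟩ := Trm.mem_fvars_subst hy
      exact ⟨x, Or.inl hx, h⟩
    · obtain ⟨x, hx, h⟩ := Trm.mem_fvars_subst hy
      exact ⟨x, Or.inr hx, h⟩
  | gt s t =>
    intro θ y hy
    rcases hy with hy | hy
    · obtain ⟨x, hx, h⟩ := Trm.mem_fvars_subst hy
      exact ⟨x, Or.inl hx, h⟩
    · obtain ⟨x, hx, h⟩ := Trm.mem_fvars_subst hy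
      exact ⟨x, Or.inr hx, h⟩
  | and a b iha ihb =>
    intro θ y hy
    rcases hy with hy | hy
    · obtain ⟨x, hx, h⟩ := iha θ y hy
      exact ⟨x, Or.inl hx, h⟩
    · obtain ⟨x, hx, h⟩ := ihb θ y hy
      exact ⟨x, Or.inr hx, h⟩
  | or a b iha ihb =>
    intro θ y hy
    rcases hy with hy | hy
    · obtain ⟨x, hx, h⟩ := iha θ y hy
      exact ⟨x, Or.inl hx, h⟩
    · obtain ⟨x, hx, h⟩ := ihb θ y hy
      exact ⟨x, Or.inr hx, h⟩
  | ex x a iha =>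
    intro θ y hy
    simp only [RForm.subst, RForm.fvars] at hy
    obtain ⟨hy1, hy2⟩ := hy
    have hy2' : y ≠ x := fun h => hy2 h
    obtain ⟨z, hz, hyz⟩ := iha _ y hy1
    by_cases hzx : z = x
    · subst hzx
      rw [if_pos rfl] at hyz
      exact absurd hyz hy2'
    · rw [if_neg hzx] at hyz
      exact ⟨z, ⟨hz, hzx⟩, hyz⟩

lemma RForm.realize_congr (O : SimpOrd F ar) : ∀ (R : RForm F ar) {v w : Subst F ar},
    (∀ x ∈ R.fvars, v x = w x) → (R.realize O v ↔ R.realize O w) := by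
  intro R
  induction R with
  | falsum => intro v w _; exact Iff.rfl
  | verum => intro v w _; exact Iff.rfl
  | eq s t =>
    intro v w h
    simp only [RForm.realize]
    rw [Trm.subst_congr (fun x hx => h x (Or.inl hx)),
        Trm.subst_congr (fun x hx => h x (Or.inr hx))]
  | gt s t =>
    intro v w h
    simp only [RForm.realize]
    rw [Trm.subst_congr (fun x hx => h x (Or.inl hx)),
        Trm.subst_congr (fun x hx => h x (Or.inr hx))]
  | and a b iha ihb =>
    intro v w h
    exact and_congr (iha (fun x hx => h x (Or.inl hx))) (ihb (fun x hx => h x (Or.inr hx)))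
  | or a b iha ihb =>
    intro v w h
    exact or_congr (iha (fun x hx => h x (Or.inl hx))) (ihb (fun x hx => h x (Or.inr hx)))
  | ex x a iha =>
    intro v w h
    simp only [RForm.realize]
    refine exists_congr fun g => and_congr_right fun _ => iha ?_
    intro z hz
    by_cases hzx : z = x
    · subst hzx; simp
    · rw [Function.update_of_ne hzx, Function.update_of_ne hzx]
      exact h z ⟨hz, hzx⟩

lemma RSat.or_split {O : SimpOrd F ar} {θ : Subst F ar} {R₁ R₂ : RForm F ar}
    (h₂ : ∀ x ∈ R₂.fvars, (θ x).IsGround)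
    (h : RSat O θ (.or R₁ R₂)) : RSat O θ R₁ ∨ RSat O θ R₂ := by
  by_contra hc
  push_neg at hc
  obtain ⟨hn1, hn2⟩ := hc
  unfold RSat at hn1 hn2 h
  push_neg at hn1 hn2
  obtain ⟨v₁, hg1, hr1⟩ := hn1
  obtain ⟨v₂, hg2, hr2⟩ := hn2
  have h' := h v₁ hg1
  simp only [RForm.subst, RForm.realize] at h'
  rcases h' with hx | hx
  · exact hr1 hx
  · refine hr2 ((RForm.realize_congr O (R₂.subst θ) ?_).mp hx)
    intro y hy
    obtain ⟨x, hx', hy'⟩ := RForm.mem_fvars_subst R₂ θ y hy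
    exact absurd hy' (Trm.isGround_notin (h₂ x hx') y)

lemma exists_ground_subst (hconst : ∃ c : F, ar c = 0) :
    ∃ v : Subst F ar, ∀ x, (v x).IsGround := by
  obtain ⟨c, hc⟩ := hconst
  refine ⟨fun _ => Trm.app c (fun _ => Trm.var 0), fun x => ?_⟩
  intro i
  exact absurd i.isLt (by omega)

lemma RSat_falsum {O : SimpOrd F ar} (hconst : ∃ c : F, ar c = 0) {θ : Subst F ar} :
    ¬ RSat O θ RForm.falsum := by
  obtain ⟨v, hv⟩ := exists_ground_subst hconst
  intro h
  exact h v hv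

lemma GroundingFor.ground_fvars {θ : Subst F ar} {C : Clause F ar} (h : GroundingFor θ C) :
    ∀ x ∈ Clause.fvars C, (θ x).IsGround := by
  rintro x ⟨L, hL, hx⟩
  have hg : (Lit.subst θ L).IsGround := h _ (Multiset.mem_map_of_mem _ hL)
  rcases hx with hx | hx
  · exact Trm.ground_subst hg.1 x hx
  · exact Trm.ground_subst hg.2 x hx

/-! Transitivity and well-foundedness of the bag extension -/

lemma MultGT.trans' {α : Type} {r : α → α → Prop}
    (hr : ∀ a b c : α, r a b → r b c → r a c)
    {N M P : Multiset α} (h1 : MultGT r N M) (h2 : MultGT r M P) : MultGT r N P := by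
  classical
  obtain ⟨X₁, Y₁, Z₁, hX₁, hN, hM₁, hc₁⟩ := h1
  obtain ⟨X₂, Y₂, Z₂, hX₂, hM₂, hP, hc₂⟩ := h2
  set Z : Multiset α := Z₁ ∩ Z₂ with hZ
  have cN : ∀ a, Multiset.count a N = Multiset.count a Z₁ + Multiset.count a X₁ :=
    fun a => by rw [hN, Multiset.count_add]
  have cM₁ : ∀ a, Multiset.count a M = Multiset.count a Z₁ + Multiset.count a Y₁ :=
    fun a => by rw [hM₁, Multiset.count_add]
  have cM₂ : ∀ a, Multiset.count a M = Multiset.count a Z₂ + Multiset.count a X₂ :=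
    fun a => by rw [hM₂, Multiset.count_add]
  have cP : ∀ a, Multiset.count a P = Multiset.count a Z₂ + Multiset.count a Y₂ :=
    fun a => by rw [hP, Multiset.count_add]
  have cZ : ∀ a, Multiset.count a Z = min (Multiset.count a Z₁) (Multiset.count a Z₂) :=
    fun a => Multiset.count_inter a _ _
  have hZN : Z ≤ N := Multiset.le_iff_count.mpr fun a => by
    have := cN a; have := cZ a; omega
  have hZP : Z ≤ P := Multiset.le_iff_count.mpr fun a => by
    have h1 := cP a; have h2 := cZ a
    have h3 := cM₁ a; have h4 := cM₂ a
    omega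
  have hX₁le : X₁ ≤ N - Z := Multiset.le_iff_count.mpr fun a => by
    rw [Multiset.count_sub]
    have := cN a; have := cZ a; omega
  refine ⟨N - Z, P - Z, Z, ?_, ?_, ?_, ?_⟩
  · intro h0
    have : X₁ ≤ 0 := h0 ▸ hX₁le
    exact hX₁ (Multiset.le_zero.mp this)
  · rw [add_comm, tsub_add_cancel_of_le hZN]
  · rw [add_comm, tsub_add_cancel_of_le hZP]
  · intro y hy
    have hyc : Multiset.count y Z < Multiset.count y P := by
      have := Multiset.count_pos.mpr hy
      rw [Multiset.count_sub] at this
      omega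
    by_cases hy2 : y ∈ Y₂
    · obtain ⟨x₂, hx₂, hr₂⟩ := hc₂ y hy2
      by_cases hx₂Y₁ : x₂ ∈ Y₁
      · obtain ⟨x₁, hx₁, hr₁⟩ := hc₁ x₂ hx₂Y₁
        exact ⟨x₁, Multiset.mem_of_le hX₁le hx₁, hr _ _ _ hr₁ hr₂⟩
      · refine ⟨x₂, ?_, hr₂⟩
        rw [← Multiset.count_pos, Multiset.count_sub]
        have e1 : Multiset.count x₂ Y₁ = 0 := Multiset.count_eq_zero.mpr hx₂Y₁
        have e2 : 0 < Multiset.count x₂ X₂ := Multiset.count_pos.mpr hx₂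
        have := cM₁ x₂; have := cM₂ x₂; have := cN x₂; have := cZ x₂
        omega
    · have e1 : Multiset.count y Y₂ = 0 := Multiset.count_eq_zero.mpr hy2
      have hy1 : y ∈ Y₁ := by
        rw [← Multiset.count_pos]
        have := cP y; have := cZ y; have := cM₁ y; have := cM₂ y
        omega
      obtain ⟨x₁, hx₁, hr₁⟩ := hc₁ y hy1
      exact ⟨x₁, Multiset.mem_of_le hX₁le hx₁, hr₁⟩

lemma MultGT.to_transGen {α : Type} {r : α → α → Prop} :
    ∀ (X Z Y N M : Multiset α), X ≠ 0 → N = Z + X → M = Z + Y →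
      (∀ y ∈ Y, ∃ x ∈ X, r x y) →
      Relation.TransGen (Relation.CutExpand (Function.swap r)) M N := by
  classical
  intro X
  induction X using Multiset.induction_on with
  | empty => intro Z Y N M h0; exact absurd rfl h0
  | cons x X' ih =>
    intro Z Y N M _ hN hM hc
    set p : α → Prop := fun y => ∃ x' ∈ X', r x' y with hp
    set Y₂ := Y.filter p with hY₂
    set Y₁ := Y.filter (fun y => ¬ p y) with hY₁
    have hYsum : Y₂ + Y₁ = Y := Multiset.filter_add_not p Y
    have hY₁r : ∀ y ∈ Y₁, r x y := by
      intro y hy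
      have hyY : y ∈ Y := Multiset.mem_of_mem_filter hy
      have hnp : ¬ p y := (Multiset.mem_filter.mp hy).2
      obtain ⟨x₀, hx₀, hr₀⟩ := hc y hyY
      rcases Multiset.mem_cons.mp hx₀ with h | h
      · subst h; exact hr₀
      · exact absurd ⟨x₀, h, hr₀⟩ hnp
    have hstep : Relation.CutExpand (Function.swap r) ((Z + Y₁) + X') N := by
      refine ⟨Y₁, x, fun a' ha' => hY₁r a' ha', ?_⟩
      rw [hN]
      have : x ::ₘ X' = {x} + X' := (Multiset.singleton_add x X').symm
      rw [this]
      abel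
    by_cases hX' : X' = (0 : Multiset α)
    · have hY₂0 : Y₂ = 0 := by
        rw [hY₂, Multiset.filter_eq_nil]
        intro a _ hpa
        obtain ⟨x', hx', _⟩ := hpa
        rw [hX'] at hx'
        exact absurd hx' (Multiset.notMem_zero x')
      have hMeq : M = (Z + Y₁) + X' := by
        rw [hM, ← hYsum, hY₂0, hX']
        abel
      exact Relation.TransGen.single (hMeq ▸ hstep)
    · have hMeq : M = (Z + Y₁) + Y₂ := by
        rw [hM, ← hYsum]; abel
      have htg := ih (Z + Y₁) Y₂ ((Z + Y₁) + X') M hX' rfl hMeq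
        (fun y hy => (Multiset.mem_filter.mp hy).2)
      exact htg.tail hstep

lemma MultGT.wf {α : Type} {r : α → α → Prop} (hw : WellFounded (Function.swap r)) :
    WellFounded (fun A B : Multiset α => MultGT r B A) := by
  have h2 : WellFounded (Relation.TransGen (Relation.CutExpand (Function.swap r))) :=
    hw.cutExpand.transGen
  refine Subrelation.wf ?_ h2
  intro A B h
  obtain ⟨X, Y, Z, h0, hN, hM, hc⟩ := h
  exact MultGT.to_transGen X Z Y B A h0 hN hM hc

lemma litGT_trans {O : SimpOrd F ar} {A B C : Lit F ar}
    (h1 : litGT O A B) (h2 : litGT O B C) : litGT O A C :=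
  MultGT.trans' (r := O.gt) (fun _ _ _ ha hb => O.trans ha hb) h1 h2

lemma clauseGT_trans {O : SimpOrd F ar} {A B C : Clause F ar}
    (h1 : clauseGT O A B) (h2 : clauseGT O B C) : clauseGT O A C :=
  MultGT.trans' (r := litGT O) (fun _ _ _ ha hb => litGT_trans ha hb) h1 h2

lemma litGT_wf (O : SimpOrd F ar) : WellFounded (fun L M : Lit F ar => litGT O M L) := by
  have h1 : WellFounded (fun A B : Multiset (Trm F ar) => MultGT O.gt B A) :=
    MultGT.wf O.wf
  exact Subrelation.wf (fun {L M} h => h) (InvImage.wf Lit.ms h1)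

lemma clauseGT_wf (O : SimpOrd F ar) :
    WellFounded (fun A B : Clause F ar => clauseGT O B A) :=
  MultGT.wf (litGT_wf O)

/-! Monotonicity lemmas -/

lemma Entails.mono {S T : Set (Clause F ar)} {D : Clause F ar} (h : S ⊆ T)
    (he : Entails S D) : Entails T D :=
  fun A hA => he A (fun C hC => hA C (h hC))

lemma Redundant.mono {O : SimpOrd F ar} {S T : Set (Clause F ar)} {D : Clause F ar}
    (h : S ⊆ T) : Redundant O S D → Redundant O T D :=
  fun ⟨Cs, h1, h2, h3⟩ => ⟨Cs, fun C hC => h (h1 C hC), h2, h3⟩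

lemma gstar_mono {S T : Set (PClause F ar)}
    (h : ∀ pc ∈ S, ∃ pc' ∈ T, pc'.cl = pc.cl) : gstar S ⊆ gstar T := by
  rintro D ⟨pc, hpc, θ, hD, hg⟩
  obtain ⟨pc', hpc', hcl⟩ := h pc hpc
  exact ⟨pc', hpc', θ, by rw [hcl]; exact hD, hg⟩

lemma gndS_subset_gstar (O : SimpOrd F ar) (S : Set (PClause F ar)) :
    gndS O S ⊆ gstar S := by
  intro D hD
  simp only [gndS, Set.mem_iUnion] at hD
  obtain ⟨pc, hpc, θ, hDeq, hg, _⟩ := hD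
  exact ⟨pc, hpc, θ, hDeq, hg⟩

/-! The saturation invariant -/

lemma saturation_invariant {O : SimpOrd F ar} {sel : SelFun F ar O}
    (hconst : ∃ c : F, ar c = 0) (𝕊 : Saturation O sel) :
    ∀ j, ∀ pc ∈ 𝕊.S j, ∀ θ : Subst F ar, GroundingFor θ pc.cl → RSat O θ pc.rf →
      Redundant O (gstar (𝕊.S j)) (Clause.subst θ pc.cl) := by
  intro j
  induction j with
  | zero =>
    intro pc hpc θ _ hsat
    rw [𝕊.init pc hpc] at hsat
    exact absurd hsat (RSat_falsum hconst)
  | succ i ih =>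
    rcases 𝕊.step i with ⟨prems, σ, concl, hprems, hinf, hSeq⟩ |
      ⟨pc₀, hpc₀, R₂, h, hred, hSeq⟩
    · have hmono : gstar (𝕊.S i) ⊆ gstar (𝕊.S (i + 1)) :=
        gstar_mono (by rw [hSeq]; intro pc' h'; exact ⟨pc', Or.inl h', rfl⟩)
      intro pc hpc θ hgr hsat
      rw [hSeq] at hpc
      rcases hpc with h' | h'
      · exact (ih pc h' θ hgr hsat).mono hmono
      · rw [Set.mem_singleton_iff] at h'
        have : pc.rf = RForm.falsum := by rw [h']
        rw [this] at hsat
        exact absurd hsat (RSat_falsum hconst)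
    · have hmono : gstar (𝕊.S i) ⊆ gstar (𝕊.S (i + 1)) := by
        refine gstar_mono ?_
        rw [hSeq]
        intro pc' h'
        by_cases hpc' : pc' = pc₀
        · exact ⟨⟨pc₀.cl, RForm.or pc₀.rf R₂, h⟩, Or.inr rfl, by rw [hpc']⟩
        · exact ⟨pc', Or.inl ⟨h', hpc'⟩, rfl⟩
      intro pc hpc θ hgr hsat
      rw [hSeq] at hpc
      rcases hpc with ⟨h1, _⟩ | h1
      · exact (ih pc h1 θ hgr hsat).mono hmono
      · rw [Set.mem_singleton_iff] at h1
        subst h1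
        have hg2 : ∀ x ∈ R₂.fvars, (θ x).IsGround := fun x hx =>
          hgr.ground_fvars x (h (Or.inr hx))
        rcases RSat.or_split hg2 hsat with hs | hs
        · exact (ih pc₀ hpc₀ θ hgr hs).mono hmono
        · exact (hred θ hgr hs).mono hmono

lemma combine_covers {O : SimpOrd F ar} {T : Set (Clause F ar)} {D : Clause F ar} :
    ∀ Cs : List (Clause F ar),
      (∀ C' ∈ Cs, ∃ Ds : List (Clause F ar), (∀ E ∈ Ds, E ∈ T) ∧
        Entails {E | E ∈ Ds} C' ∧ ∀ E ∈ Ds, clauseGT O D E) →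
      ∃ Ds : List (Clause F ar), (∀ E ∈ Ds, E ∈ T) ∧
        (∀ C' ∈ Cs, Entails {E | E ∈ Ds} C') ∧ ∀ E ∈ Ds, clauseGT O D E := by
  intro Cs
  induction Cs with
  | nil => intro _; exact ⟨[], by simp, by simp, by simp⟩
  | cons C' Cs ih =>
    intro hcov
    obtain ⟨Ds₁, a1, b1, c1⟩ := hcov C' (by simp)
    obtain ⟨Ds₂, a2, b2, c2⟩ := ih (fun x hx => hcov x (by simp [hx]))
    refine ⟨Ds₁ ++ Ds₂, ?_, ?_, ?_⟩
    · intro E hE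
      rcases List.mem_append.mp hE with hh | hh
      exacts [a1 E hh, a2 E hh]
    · intro x hx
      rcases List.mem_cons.mp hx with rfl | hh
      · exact Entails.mono (fun E hE => List.mem_append.mpr (Or.inl hE)) b1
      · exact Entails.mono (fun E hE => List.mem_append.mpr (Or.inr hE)) (b2 x hh)
    · intro E hE
      rcases List.mem_append.mp hE with hh | hh
      exacts [c1 E hh, c2 E hh]

end Aux

/-- For every `j`, a ground clause is redundant w.r.t. `S j *`
iff it is redundant w.r.t. `⌊S j⌋`. -/
theorem redundant_gstar_iff_gnd {F : Type} {ar : F → ℕ} (hF : Finite F) (hconst : ∃ c : F, ar c = 0)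
    (O : SimpOrd F ar) (sel : SelFun F ar O) (𝕊 : Saturation O sel) :
    ∀ (j : ℕ) (C : Clause F ar), Clause.IsGround C →
      (Redundant O (gstar (𝕊.S j)) C ↔ Redundant O (gndS O (𝕊.S j)) C) := by
  intro j C hC
  constructor
  · intro hred
    clear hC
    refine (clauseGT_wf O).induction
      (C := fun D => Redundant O (gstar (𝕊.S j)) D → Redundant O (gndS O (𝕊.S j)) D)
      C ?_ hred
    intro D ihD hredD
    obtain ⟨Cs, hsub, hent, hlt⟩ := hredD
    have hcov : ∀ C' ∈ Cs, ∃ Ds : List (Clause F ar),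
        (∀ E ∈ Ds, E ∈ gndS O (𝕊.S j)) ∧ Entails {E | E ∈ Ds} C' ∧
        ∀ E ∈ Ds, clauseGT O D E := by
      intro C' hC'
      obtain ⟨pc, hpc, θ, hCeq, hground⟩ := hsub C' hC'
      by_cases hrs : RSat O θ pc.rf
      · have hgr : GroundingFor θ pc.cl := by rw [GroundingFor, ← hCeq]; exact hground
        have hred' := saturation_invariant hconst 𝕊 j pc hpc θ hgr hrs
        rw [← hCeq] at hred'
        obtain ⟨Ds, a, b, c⟩ := ihD C' (hlt C' hC') hred'
        exact ⟨Ds, a, b, fun E hE => clauseGT_trans (hlt C' hC') (c E hE)⟩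
      · refine ⟨[C'], ?_, ?_, ?_⟩
        · intro E hE
          rw [List.mem_singleton] at hE
          rw [hE]
          exact Set.mem_biUnion hpc ⟨θ, hCeq, hground, hrs⟩
        · intro A hA
          exact hA C' (List.mem_singleton.mpr rfl)
        · intro E hE
          rw [List.mem_singleton] at hE
          rw [hE]
          exact hlt C' hC'
    obtain ⟨Ds, h1, h2, h3⟩ := combine_covers Cs hcov
    exact ⟨Ds, h1, fun A hA => hent A (fun C' hC' => h2 C' hC' A hA), h3⟩
  · exact fun hr => hr.mono (gndS_subset_gstar O (𝕊.S j))


end PaRC
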